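/- arXiv:2603.21026 — 11 statements merged into one kernel-verified Lean document; each statement's English description precedes it below -/
import Mathlib

section
/- Let g ∈ ℂ^N. The collection {T_i g : 1 ≤ i ≤ N} is an orthonormal basis of ℂ^N if and only if |ĝ(l)| = 1/√N for all 1 ≤ l ≤ N. -/
open scoped ComplexConjugate BigOperators

/-- Graph Fourier transform: `(gft χ f) l = ⟨f, χ_l⟩ = ∑ n, f n * conj (χ l n)`. -/
noncomputable def gft {N : ℕ} (χ : Fin N → EuclideanSpace ℂ (Fin N))
    (f : EuclideanSpace ℂ (Fin N)) : EuclideanSpace ℂ (Fin N) :=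
  WithLp.toLp 2 (fun l => ∑ n, f n * conj (χ l n))

/-- Generalized translation: `(T_i f)(n) = √N · ∑ l, f̂(l) · conj (χ l i) · χ l n`. -/
noncomputable def gtrans {N : ℕ} (χ : Fin N → EuclideanSpace ℂ (Fin N))
    (i : Fin N) (f : EuclideanSpace ℂ (Fin N)) : EuclideanSpace ℂ (Fin N) :=
  WithLp.toLp 2 (fun n => (Real.sqrt N : ℂ) * ∑ l, gft χ f l * conj (χ l i) * χ l n)


lemma sum_rot {α M : Type*} [AddCommMonoid M] [Fintype α] (F : α → α → α → M) :
    ∑ i, ∑ j, ∑ l, F i j l = ∑ l, ∑ i, ∑ j, F i j l :=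
  (Finset.sum_congr rfl fun _ _ => Finset.sum_comm).trans Finset.sum_comm

lemma inner_chi {N : ℕ} (χ : Fin N → EuclideanSpace ℂ (Fin N)) (hχ : Orthonormal ℂ χ)
    (l m : Fin N) : ∑ n, conj (χ l n) * χ m n = if l = m then 1 else 0 := by
  have := orthonormal_iff_ite.mp hχ l m
  simpa [PiLp.inner_apply, RCLike.inner_apply, mul_comm] using this

lemma inner_gtrans {N : ℕ} (χ : Fin N → EuclideanSpace ℂ (Fin N)) (hχ : Orthonormal ℂ χ)
    (g : EuclideanSpace ℂ (Fin N)) (i j : Fin N) :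
    (inner ℂ (gtrans χ i g) (gtrans χ j g) : ℂ) =
      (N : ℂ) * ∑ l, conj (gft χ g l) * gft χ g l * (χ l i * conj (χ l j)) := by
  classical
  have hsq : ((Real.sqrt N : ℂ)) * (Real.sqrt N : ℂ) = (N : ℂ) := by
    rw [← Complex.ofReal_mul, Real.mul_self_sqrt (Nat.cast_nonneg N)]
    norm_cast
  calc (inner ℂ (gtrans χ i g) (gtrans χ j g) : ℂ)
      = ∑ n, conj ((Real.sqrt N : ℂ) * ∑ l, gft χ g l * conj (χ l i) * χ l n) *
          ((Real.sqrt N : ℂ) * ∑ m, gft χ g m * conj (χ m j) * χ m n) := by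
        simp [gtrans, PiLp.inner_apply, RCLike.inner_apply]
        exact Finset.sum_congr rfl fun _ _ => mul_comm _ _
    _ = (N : ℂ) * ∑ n, ∑ l, ∑ m, (conj (gft χ g l) * χ l i * conj (χ l n)) *
          (gft χ g m * conj (χ m j) * χ m n) := by
        rw [Finset.mul_sum]
        refine Finset.sum_congr rfl fun n _ => ?_
        rw [← Finset.sum_mul_sum]
        simp only [map_mul, map_sum, Complex.conj_ofReal, Complex.conj_conj]
        rw [← hsq]; ring
    _ = (N : ℂ) * ∑ l, ∑ m, ∑ n, (conj (gft χ g l) * χ l i * conj (χ l n)) *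
          (gft χ g m * conj (χ m j) * χ m n) := by
        congr 1
        rw [Finset.sum_comm]
        exact Finset.sum_congr rfl fun l _ => Finset.sum_comm
    _ = (N : ℂ) * ∑ l, ∑ m, (conj (gft χ g l) * χ l i) * (gft χ g m * conj (χ m j)) *
          ∑ n, conj (χ l n) * χ m n := by
        congr 1
        refine Finset.sum_congr rfl fun l _ => Finset.sum_congr rfl fun m _ => ?_
        rw [Finset.mul_sum]
        exact Finset.sum_congr rfl fun n _ => by ring
    _ = (N : ℂ) * ∑ l, conj (gft χ g l) * gft χ g l * (χ l i * conj (χ l j)) := by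
        congr 1
        refine Finset.sum_congr rfl fun l _ => ?_
        rw [Finset.sum_eq_single l]
        · rw [inner_chi χ hχ l l]; simp; ring
        · intro m _ hm
          rw [inner_chi χ hχ l m, if_neg (Ne.symm hm), mul_zero]
        · simp

lemma sum_chi_mul_conj {N : ℕ} (χ : Fin N → EuclideanSpace ℂ (Fin N)) (hχ : Orthonormal ℂ χ)
    (hspan : Submodule.span ℂ (Set.range χ) = ⊤) (i j : Fin N) :
    ∑ l, χ l i * conj (χ l j) = if i = j then 1 else 0 := by
  classical
  let b : OrthonormalBasis (Fin N) ℂ (EuclideanSpace ℂ (Fin N)) :=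
    OrthonormalBasis.mk hχ (by rw [hspan])
  have hb : ⇑b = χ := OrthonormalBasis.coe_mk hχ _
  have := b.sum_inner_mul_inner (EuclideanSpace.single i (1:ℂ)) (EuclideanSpace.single j (1:ℂ))
  rw [hb] at this
  simp only [EuclideanSpace.inner_single_left, EuclideanSpace.inner_single_right, map_one,
    one_mul, mul_one] at this
  rw [this]
  simp [EuclideanSpace.inner_single_left, EuclideanSpace.single_apply, eq_comm]

/-- `{T_i g : 1 ≤ i ≤ N}` is an orthonormal basis of `ℂ^N` iff `|ĝ(l)| = 1/√N` for all `l`. -/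
theorem translates_orthonormal_basis_iff {N : ℕ} (hN : 0 < N)
    (χ : Fin N → EuclideanSpace ℂ (Fin N)) (hχ : Orthonormal ℂ χ)
    (hspan : Submodule.span ℂ (Set.range χ) = ⊤)
    (g : EuclideanSpace ℂ (Fin N)) :
    (Orthonormal ℂ (fun i => gtrans χ i g) ∧
      Submodule.span ℂ (Set.range fun i => gtrans χ i g) = ⊤) ↔
    (∀ l : Fin N, ‖gft χ g l‖ = 1 / Real.sqrt N) := by
  classical
  have hNR : (0:ℝ) < N := Nat.cast_pos.mpr hN
  constructor
  · rintro ⟨hon, -⟩ m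
    have hite := orthonormal_iff_ite.mp hon
    have key : ∑ i, ∑ j, conj (χ m i) * χ m j * (inner ℂ (gtrans χ i g) (gtrans χ j g) : ℂ)
        = (N : ℂ) * (conj (gft χ g m) * gft χ g m) := by
      have hterm : ∀ i j : Fin N, conj (χ m i) * χ m j * (inner ℂ (gtrans χ i g) (gtrans χ j g) : ℂ)
          = ∑ l, (N : ℂ) * (conj (gft χ g l) * gft χ g l *
              ((conj (χ m i) * χ l i) * (χ m j * conj (χ l j)))) := by
        intro i j
        rw [inner_gtrans χ hχ g i j]
        simp only [Finset.mul_sum]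
        exact Finset.sum_congr rfl fun l _ => by ring
      calc ∑ i, ∑ j, conj (χ m i) * χ m j * (inner ℂ (gtrans χ i g) (gtrans χ j g) : ℂ)
          = ∑ l, ∑ i, ∑ j, (N : ℂ) * (conj (gft χ g l) * gft χ g l *
              ((conj (χ m i) * χ l i) * (χ m j * conj (χ l j)))) := by
            simp only [hterm]
            exact sum_rot _
        _ = ∑ l, (N : ℂ) * (conj (gft χ g l) * gft χ g l *
              ((∑ i, conj (χ m i) * χ l i) * (∑ j, χ m j * conj (χ l j)))) := by
            refine Finset.sum_congr rfl fun l _ => ?_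
            rw [Finset.sum_mul_sum]
            simp only [Finset.mul_sum]
        _ = (N : ℂ) * (conj (gft χ g m) * gft χ g m) := by
            rw [Finset.sum_eq_single m]
            · have h1 : ∑ j, χ m j * conj (χ m j) = 1 := by
                have h := inner_chi χ hχ m m
                rw [if_pos rfl] at h
                rw [← h]
                exact Finset.sum_congr rfl fun j _ => mul_comm _ _
              rw [inner_chi χ hχ m m, if_pos rfl, h1]
              ring
            · intro l _ hl
              rw [inner_chi χ hχ m l, if_neg (Ne.symm hl)]
              simp
            · simp
    have key2 : ∑ i, ∑ j, conj (χ m i) * χ m j * (inner ℂ (gtrans χ i g) (gtrans χ j g) : ℂ)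
        = 1 := by
      calc ∑ i, ∑ j, conj (χ m i) * χ m j * (inner ℂ (gtrans χ i g) (gtrans χ j g) : ℂ)
          = ∑ i, conj (χ m i) * χ m i := by
            refine Finset.sum_congr rfl fun i _ => ?_
            rw [Finset.sum_eq_single i]
            · rw [hite i i, if_pos rfl, mul_one]
            · intro j _ hj
              rw [hite i j, if_neg (Ne.symm hj), mul_zero]
            · simp
        _ = 1 := by rw [inner_chi χ hχ m m, if_pos rfl]
    rw [key2] at key
    have habs : (N : ℂ) * ((‖gft χ g m‖ : ℝ) : ℂ)^2 = 1 := by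
      rw [← Complex.ofReal_pow, Complex.sq_norm, Complex.normSq_eq_conj_mul_self]
      exact key.symm
    have habsR : (N : ℝ) * (‖gft χ g m‖)^2 = 1 := by
      exact_mod_cast habs
    have hsq : (‖gft χ g m‖)^2 = (1 / Real.sqrt N)^2 := by
      rw [div_pow, one_pow, Real.sq_sqrt hNR.le]
      field_simp
      linarith
    have := congrArg Real.sqrt hsq
    rwa [Real.sqrt_sq (norm_nonneg _),
      Real.sqrt_sq (by positivity)] at this
  · intro habs
    have hval : ∀ l, conj (gft χ g l) * gft χ g l = 1 / (N : ℂ) := by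
      intro l
      rw [← Complex.normSq_eq_conj_mul_self, ← Complex.sq_norm, habs l]
      rw [div_pow, one_pow, Real.sq_sqrt hNR.le]
      push_cast
      norm_num
    have hNc : (N : ℂ) ≠ 0 := by exact_mod_cast hN.ne'
    have hinner : ∀ i j, (inner ℂ (gtrans χ i g) (gtrans χ j g) : ℂ) = if i = j then 1 else 0 := by
      intro i j
      rw [inner_gtrans χ hχ g i j]
      simp only [hval]
      rw [← Finset.mul_sum, ← mul_assoc, mul_one_div, div_self hNc, one_mul,
        sum_chi_mul_conj χ hχ hspan i j]
    have hon : Orthonormal ℂ (fun i => gtrans χ i g) := orthonormal_iff_ite.mpr hinner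
    have : Nonempty (Fin N) := ⟨⟨0, hN⟩⟩
    refine ⟨hon, hon.linearIndependent.span_eq_top_of_card_eq_finrank ?_⟩
    simp [finrank_euclideanSpace_fin]
end

section
/- Let g ∈ ℂ^N, let χ denote the N×N complex matrix whose l-th column is χ_l, and let ĝ(A) := χ · diag(ĝ(1), …, ĝ(N)) · χ* (where χ* is the conjugate transpose). Then {T_i g : 1 ≤ i ≤ N} is an orthonormal basis of ℂ^N if and only if the matrix √N · ĝ(A) is unitary. -/
open scoped ComplexConjugate BigOperators

/-- `{T_i g : 1 ≤ i ≤ N}` is an orthonormal basis of `ℂ^N` iff the matrix `√N · ĝ(A)`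
is unitary, where `ĝ(A) = χ · diag(ĝ) · χ*`. -/
theorem translates_orthonormal_basis_iff_unitary {N : ℕ} (hN : 0 < N)
    (χ : Fin N → EuclideanSpace ℂ (Fin N)) (hχ : Orthonormal ℂ χ)
    (hspan : Submodule.span ℂ (Set.range χ) = ⊤)
    (g : EuclideanSpace ℂ (Fin N))
    (X : Matrix (Fin N) (Fin N) ℂ) (hX : ∀ n l : Fin N, X n l = χ l n)
    (gA : Matrix (Fin N) (Fin N) ℂ)
    (hgA : gA = X * Matrix.diagonal (fun l => gft χ g l) * X.conjTranspose) :
    (Orthonormal ℂ (fun i => gtrans χ i g) ∧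
      Submodule.span ℂ (Set.range fun i => gtrans χ i g) = ⊤) ↔
    (Real.sqrt N : ℂ) • gA ∈ Matrix.unitaryGroup (Fin N) ℂ := by
  set U : Matrix (Fin N) (Fin N) ℂ := (Real.sqrt N : ℂ) • gA with hU
  have hentry : ∀ i n, gtrans χ i g n = U n i := by
    intro i n
    have h1 : gA n i = ∑ l, χ l n * gft χ g l * conj (χ l i) := by
      rw [hgA, Matrix.mul_assoc]
      simp [Matrix.mul_apply, Matrix.diagonal_apply, ite_mul, zero_mul, Finset.sum_ite_eq, Matrix.conjTranspose_apply, hX, mul_assoc]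
    simp only [hU, Matrix.smul_apply, smul_eq_mul, h1, gtrans, PiLp.toLp_apply]
    rw [Finset.mul_sum, Finset.mul_sum]
    exact Finset.sum_congr rfl fun l _ => by ring
  have horth : Orthonormal ℂ (fun i => gtrans χ i g) ↔ star U * U = 1 := by
    rw [orthonormal_iff_ite, ← Matrix.ext_iff]
    constructor
    · intro h i j
      have := h i j
      simp only [PiLp.inner_apply, RCLike.inner_apply, hentry] at this
      simp [Matrix.mul_apply, Matrix.conjTranspose_apply, Matrix.one_apply, this]
      rw [← this]; exact Finset.sum_congr rfl fun _ _ => mul_comm _ _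
    · intro h i j
      have := h i j
      simp only [Matrix.mul_apply, Matrix.star_apply, Matrix.conjTranspose_apply,
        Matrix.one_apply, Complex.star_def] at this
      simp [PiLp.inner_apply, RCLike.inner_apply, hentry, this]
      rw [← this]; exact Finset.sum_congr rfl fun _ _ => mul_comm _ _
  constructor
  · rintro ⟨ho, -⟩
    exact Matrix.mem_unitaryGroup_iff'.mpr (horth.mp ho)
  · intro hu
    have ho := horth.mpr (Matrix.mem_unitaryGroup_iff'.mp hu)
    refine ⟨ho, ?_⟩
    haveI : Nonempty (Fin N) := ⟨⟨0, hN⟩⟩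
    apply ho.linearIndependent.span_eq_top_of_card_eq_finrank
    simp
end

section
/- Let g, h ∈ ℂ^N. The collections {T_i g : 1 ≤ i ≤ N} and {T_j h : 1 ≤ j ≤ N} are biorthogonal, i.e. ⟨T_i g, T_j h⟩ = δ_{ij} for all 1 ≤ i, j ≤ N, if and only if N · conj(ĝ(l)) · ĥ(l) = 1 for all 1 ≤ l ≤ N. -/
open scoped ComplexConjugate BigOperators

lemma ortho1 {N : ℕ} {χ : Fin N → EuclideanSpace ℂ (Fin N)} (hχ : Orthonormal ℂ χ)
    (l m : Fin N) : ∑ n, χ l n * conj (χ m n) = if l = m then (1:ℂ) else 0 := by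
  have := orthonormal_iff_ite.mp hχ m l
  rw [PiLp.inner_apply] at this
  simp only [RCLike.inner_apply] at this
  rw [show (if l = m then (1:ℂ) else 0) = if m = l then 1 else 0 by simp [eq_comm], ← this]

lemma ortho2 {N : ℕ} {χ : Fin N → EuclideanSpace ℂ (Fin N)} (hχ : Orthonormal ℂ χ)
    (hspan : Submodule.span ℂ (Set.range χ) = ⊤)
    (i j : Fin N) : ∑ l, χ l i * conj (χ l j) = if i = j then (1:ℂ) else 0 := by
  let b : OrthonormalBasis (Fin N) ℂ (EuclideanSpace ℂ (Fin N)) :=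
    OrthonormalBasis.mk hχ hspan.ge
  have hb : ∀ l, b l = χ l := fun l => by simp [b]
  have key := b.sum_inner_mul_inner (EuclideanSpace.single i (1:ℂ))
    (EuclideanSpace.single j (1:ℂ))
  simp only [hb, EuclideanSpace.inner_single_left, EuclideanSpace.inner_single_right,
    map_one, one_mul, mul_one] at key
  rw [key]
  by_cases hij : i = j
  · simp [hij, EuclideanSpace.single_apply]
  · rw [EuclideanSpace.single_apply, if_neg (fun h : j = i => hij h.symm)]
    simp [hij]

lemma key_expand {N : ℕ} {χ : Fin N → EuclideanSpace ℂ (Fin N)} (hχ : Orthonormal ℂ χ)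
    (g h : EuclideanSpace ℂ (Fin N)) (i j : Fin N) :
    (∑ n, gtrans χ i g n * conj (gtrans χ j h n)) =
    ∑ l, ((N:ℂ) * gft χ g l * conj (gft χ h l)) * (conj (χ l i) * χ l j) := by
  have sqc : ((Real.sqrt N : ℝ) : ℂ) * conj ((Real.sqrt N : ℝ) : ℂ) = (N : ℂ) := by
    rw [Complex.conj_ofReal, ← Complex.ofReal_mul,
      Real.mul_self_sqrt (Nat.cast_nonneg N)]
    simp
  have step1 : ∀ n, gtrans χ i g n * conj (gtrans χ j h n) =
      ∑ l, ∑ m, ((N:ℂ) * gft χ g l * conj (gft χ h m)) * (conj (χ l i) * χ m j) *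
        (χ l n * conj (χ m n)) := by
    intro n
    unfold gtrans
    simp only [WithLp.ofLp_toLp]
    rw [map_mul, map_sum, mul_mul_mul_comm, sqc, Finset.sum_mul_sum, Finset.mul_sum]
    refine Finset.sum_congr rfl fun l _ => ?_
    rw [Finset.mul_sum]
    refine Finset.sum_congr rfl fun m _ => ?_
    simp only [map_mul, Complex.conj_conj]
    ring
  simp only [step1]
  rw [Finset.sum_comm]
  refine Finset.sum_congr rfl fun l _ => ?_
  rw [Finset.sum_comm]
  have : ∀ m, ∑ n, ((N:ℂ) * gft χ g l * conj (gft χ h m)) * (conj (χ l i) * χ m j) *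
      (χ l n * conj (χ m n)) =
      ((N:ℂ) * gft χ g l * conj (gft χ h m)) * (conj (χ l i) * χ m j) *
        (if l = m then 1 else 0) := by
    intro m
    rw [← Finset.mul_sum, ortho1 hχ]
  simp only [this, mul_ite, mul_one, mul_zero, Finset.sum_ite_eq, Finset.mem_univ, if_true]


/-- `{T_i g}` and `{T_j h}` are biorthogonal iff `N · conj(ĝ(l)) · ĥ(l) = 1` for all `l`. -/
theorem translates_biorthogonal_iff {N : ℕ} (hN : 0 < N)
    (χ : Fin N → EuclideanSpace ℂ (Fin N)) (hχ : Orthonormal ℂ χ)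
    (hspan : Submodule.span ℂ (Set.range χ) = ⊤)
    (g h : EuclideanSpace ℂ (Fin N)) :
    (∀ i j : Fin N, (∑ n, gtrans χ i g n * conj (gtrans χ j h n)) =
        if i = j then 1 else 0) ↔
    (∀ l : Fin N, (N : ℂ) * conj (gft χ g l) * gft χ h l = 1) := by
  set d : Fin N → ℂ := fun l => (N:ℂ) * gft χ g l * conj (gft χ h l) with hd
  have hdconj : ∀ l, ((N : ℂ) * conj (gft χ g l) * gft χ h l = 1) ↔ d l = 1 := by
    intro l
    constructor
    · intro hl
      have := congrArg conj hl
      simpa [hd, map_mul, mul_comm, mul_assoc, mul_left_comm] using this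
    · intro hl
      have := congrArg conj hl
      simpa [hd, map_mul, mul_comm, mul_assoc, mul_left_comm] using this
  constructor
  · intro H m
    rw [hdconj]
    have H' : ∀ i j : Fin N, ∑ l, d l * (conj (χ l i) * χ l j) =
        if i = j then (1:ℂ) else 0 := fun i j =>
      (key_expand hχ g h i j).symm.trans (H i j)
    have inner_j : ∀ i, ∑ j, (∑ l, d l * (conj (χ l i) * χ l j)) * conj (χ m j)
        = d m * conj (χ m i) := by
      intro i
      simp only [Finset.sum_mul]
      rw [Finset.sum_comm]
      have : ∀ l, ∑ j, d l * (conj (χ l i) * χ l j) * conj (χ m j)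
          = d l * conj (χ l i) * (if l = m then 1 else 0) := by
        intro l
        rw [← ortho1 hχ l m, Finset.mul_sum]
        exact Finset.sum_congr rfl fun j _ => by ring
      simp only [this, mul_ite, mul_one, mul_zero, Finset.sum_ite_eq', Finset.mem_univ,
        if_true]
    calc d m = ∑ i, χ m i * (d m * conj (χ m i)) := by
          rw [show ∑ i, χ m i * (d m * conj (χ m i)) = d m * ∑ i, χ m i * conj (χ m i) by
            rw [Finset.mul_sum]; exact Finset.sum_congr rfl fun i _ => by ring]
          rw [ortho1 hχ m m]
          simp
      _ = ∑ i, χ m i * (∑ j, (∑ l, d l * (conj (χ l i) * χ l j)) * conj (χ m j)) := by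
          simp only [inner_j]
      _ = ∑ i, χ m i * (∑ j, (if i = j then (1:ℂ) else 0) * conj (χ m j)) := by
          simp only [H']
      _ = ∑ i, χ m i * conj (χ m i) := by
          refine Finset.sum_congr rfl fun i _ => ?_
          simp only [ite_mul, one_mul, zero_mul, Finset.sum_ite_eq, Finset.mem_univ, if_true]
      _ = 1 := by rw [ortho1 hχ m m]; simp
  · intro H i j
    rw [key_expand hχ g h i j]
    have hd1 : ∀ l, (N:ℂ) * gft χ g l * conj (gft χ h l) = 1 := fun l => (hdconj l).mp (H l)
    simp only [hd1, one_mul]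
    have := congrArg conj (ortho2 hχ hspan i j)
    simpa [map_sum, map_mul, apply_ite] using this
end

section
/- Let g ∈ ℂ^N. If ĝ(l) ≠ 0 for all 1 ≤ l ≤ N, then for every m ≤ N the collection {T_i g : 1 ≤ i ≤ m} is linearly independent in ℂ^N. -/
open scoped ComplexConjugate BigOperators

lemma gft_inner {N : ℕ} (χ : Fin N → EuclideanSpace ℂ (Fin N))
    (f : EuclideanSpace ℂ (Fin N)) (l : Fin N) :
    gft χ f l = @inner ℂ _ _ (χ l) f := by
  simp [gft, PiLp.inner_apply, RCLike.inner_apply, mul_comm]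

lemma orth_sum {N : ℕ} {χ : Fin N → EuclideanSpace ℂ (Fin N)} (hχ : Orthonormal ℂ χ)
    (l l' : Fin N) : ∑ n, χ l' n * conj (χ l n) = if l = l' then 1 else 0 := by
  have := orthonormal_iff_ite.mp hχ l l'
  simpa [PiLp.inner_apply, RCLike.inner_apply, mul_comm] using this

lemma gft_gtrans {N : ℕ} {χ : Fin N → EuclideanSpace ℂ (Fin N)} (hχ : Orthonormal ℂ χ)
    (i l : Fin N) (g : EuclideanSpace ℂ (Fin N)) :
    gft χ (gtrans χ i g) l
      = (Real.sqrt N : ℂ) * (gft χ g l * conj (χ l i)) := by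
  show (∑ n, gtrans χ i g n * conj (χ l n)) = _
  simp only [gtrans]
  calc ∑ n, ((Real.sqrt N : ℂ) * ∑ l', gft χ g l' * conj (χ l' i) * χ l' n) * conj (χ l n)
      = (Real.sqrt N : ℂ) * ∑ n, ∑ l', gft χ g l' * conj (χ l' i) * (χ l' n * conj (χ l n)) := by
        rw [Finset.mul_sum]
        refine Finset.sum_congr rfl fun n _ => ?_
        rw [mul_assoc, Finset.sum_mul]
        congr 1
        exact Finset.sum_congr rfl fun l' _ => by ring
    _ = (Real.sqrt N : ℂ) * ∑ l', gft χ g l' * conj (χ l' i) * (∑ n, χ l' n * conj (χ l n)) := by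
        rw [Finset.sum_comm]
        simp [Finset.mul_sum]
    _ = (Real.sqrt N : ℂ) * (gft χ g l * conj (χ l i)) := by
        congr 1
        rw [Finset.sum_congr rfl fun l' _ => by rw [orth_sum hχ l l']]
        simp

/-- If `ĝ(l) ≠ 0` for all `l`, then `{T_i g : 1 ≤ i ≤ m}` is linearly independent
for every `m ≤ N`. -/
theorem translates_linearIndependent {N : ℕ} (hN : 0 < N)
    (χ : Fin N → EuclideanSpace ℂ (Fin N)) (hχ : Orthonormal ℂ χ)
    (hspan : Submodule.span ℂ (Set.range χ) = ⊤)
    (g : EuclideanSpace ℂ (Fin N))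
    (hg : ∀ l : Fin N, gft χ g l ≠ 0) :
    ∀ m : ℕ, ∀ hm : m ≤ N,
      LinearIndependent ℂ (fun i : Fin m => gtrans χ (Fin.castLE hm i) g) := by
  intro m hm
  rw [Fintype.linearIndependent_iff]
  intro c hc
  -- first: linearity of gft over the sum
  have hsqrt : (Real.sqrt N : ℂ) ≠ 0 := by
    have : (0:ℝ) < Real.sqrt N := Real.sqrt_pos.mpr (by exact_mod_cast hN)
    exact_mod_cast this.ne'
  have hlin : ∀ l : Fin N,
      gft χ (∑ i : Fin m, c i • gtrans χ (Fin.castLE hm i) g) l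
        = ∑ i : Fin m, c i * gft χ (gtrans χ (Fin.castLE hm i) g) l := by
    intro l
    show (∑ n, (∑ i : Fin m, c i • gtrans χ (Fin.castLE hm i) g) n * conj (χ l n)) = _
    have happ : ∀ n : Fin N,
        (∑ i : Fin m, c i • gtrans χ (Fin.castLE hm i) g) n
          = ∑ i : Fin m, c i * gtrans χ (Fin.castLE hm i) g n := by
      intro n
      induction (Finset.univ : Finset (Fin m)) using Finset.induction with
      | empty => simp
      | insert _ _ h ih =>
        rw [Finset.sum_insert h, Finset.sum_insert h, ← ih]
        rfl
    simp_rw [happ, Finset.sum_mul]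
    rw [Finset.sum_comm]
    refine Finset.sum_congr rfl fun i _ => ?_
    show _ = c i * ∑ n, gtrans χ (Fin.castLE hm i) g n * conj (χ l n)
    rw [Finset.mul_sum]
    exact Finset.sum_congr rfl fun n _ => by ring
  have hsum : ∀ l : Fin N, ∑ i : Fin m, c i * conj (χ l (Fin.castLE hm i)) = 0 := by
    intro l
    have h0 : gft χ (∑ i : Fin m, c i • gtrans χ (Fin.castLE hm i) g) l = 0 := by
      rw [hc]; simp [gft]
    rw [hlin l] at h0
    simp_rw [gft_gtrans hχ] at h0
    have : (Real.sqrt N : ℂ) * (gft χ g l *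
        ∑ i : Fin m, c i * conj (χ l (Fin.castLE hm i))) = 0 := by
      rw [← h0, Finset.mul_sum, Finset.mul_sum]
      exact Finset.sum_congr rfl fun i _ => by ring
    rcases mul_eq_zero.mp this with h | h
    · exact absurd h hsqrt
    rcases mul_eq_zero.mp h with h | h
    · exact absurd h (hg l)
    · exact h
  -- define the coefficient vector extended by zero
  set v : EuclideanSpace ℂ (Fin N) :=
    ∑ i : Fin m, c i • EuclideanSpace.single (Fin.castLE hm i) (1 : ℂ) with hv
  have hvapp : ∀ n : Fin N, v n = ∑ i : Fin m, c i * (if n = Fin.castLE hm i then 1 else 0) := by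
    intro n
    rw [hv]
    induction (Finset.univ : Finset (Fin m)) using Finset.induction with
    | empty => simp
    | insert _ _ h ih =>
      rw [Finset.sum_insert h, Finset.sum_insert h, ← ih]
      simp [EuclideanSpace.single_apply]
  have hvinner : ∀ l : Fin N, @inner ℂ _ _ (χ l) v = 0 := by
    intro l
    rw [← gft_inner]
    show (∑ n, v n * conj (χ l n)) = 0
    simp_rw [hvapp, Finset.sum_mul]
    rw [Finset.sum_comm]
    have hstep : ∀ i : Fin m,
        ∑ n, c i * (if n = Fin.castLE hm i then 1 else 0) * conj (χ l n)
          = c i * conj (χ l (Fin.castLE hm i)) := by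
      intro i
      calc ∑ n, c i * (if n = Fin.castLE hm i then 1 else 0) * conj (χ l n)
          = ∑ n, (if n = Fin.castLE hm i then c i * conj (χ l n) else 0) :=
            Finset.sum_congr rfl fun n _ => by split <;> simp
        _ = c i * conj (χ l (Fin.castLE hm i)) := by
            rw [Finset.sum_ite_eq']; simp
    rw [Finset.sum_congr rfl fun i _ => hstep i]
    exact hsum l
  have hv0 : v = 0 := by
    have hker : Submodule.span ℂ (Set.range χ) ≤
        LinearMap.ker ((innerSL ℂ v).toLinearMap) := by
      rw [Submodule.span_le]
      rintro _ ⟨l, rfl⟩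
      simp only [SetLike.mem_coe, LinearMap.mem_ker, ContinuousLinearMap.coe_coe, innerSL_apply_apply]
      rw [← inner_conj_symm, hvinner l, map_zero]
    rw [hspan] at hker
    have := hker (Submodule.mem_top : v ∈ ⊤)
    simp only [LinearMap.mem_ker, ContinuousLinearMap.coe_coe, innerSL_apply_apply] at this
    exact inner_self_eq_zero.mp this
  intro i
  have := congrArg (fun w : EuclideanSpace ℂ (Fin N) => w (Fin.castLE hm i)) hv0
  simp only at this
  rw [hvapp (Fin.castLE hm i)] at this
  have heq : ∀ j : Fin m,
      (if Fin.castLE hm i = Fin.castLE hm j then (1:ℂ) else 0) = if j = i then 1 else 0 := by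
    intro j
    by_cases h : j = i
    · simp [h]
    · have : Fin.castLE hm i ≠ Fin.castLE hm j :=
        fun hh => h ((Fin.castLE_injective hm hh).symm)
      simp [h, this]
  simp_rw [heq, mul_ite, mul_one, mul_zero, Finset.sum_ite_eq'] at this
  simpa using this
end

section
/- Let g ∈ ℂ^N and m ≤ N. If the collection {T_i g : 1 ≤ i ≤ m} is linearly independent in ℂ^N, then there exist m distinct indices l_1, …, l_m in {1, …, N} such that ĝ(l_k) ≠ 0 for all k = 1, …, m. -/
open scoped ComplexConjugate BigOperators

private lemma euclidean_sum_apply {N : ℕ} {α : Type*} (S : Finset α)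
    (f : α → EuclideanSpace ℂ (Fin N)) (n : Fin N) :
    (∑ x ∈ S, f x) n = ∑ x ∈ S, f x n := by
  induction S using Finset.cons_induction with
  | empty => rfl
  | cons a s ha ih => rw [Finset.sum_cons, Finset.sum_cons, ← ih]; rfl

/-- If `{T_i g : 1 ≤ i ≤ m}` is linearly independent, then there exist `m` distinct
indices `l_1, …, l_m` with `ĝ(l_k) ≠ 0`. -/
theorem translates_linearIndependent_necessary {N : ℕ} (hN : 0 < N)
    (χ : Fin N → EuclideanSpace ℂ (Fin N)) (hχ : Orthonormal ℂ χ)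
    (hspan : Submodule.span ℂ (Set.range χ) = ⊤)
    (g : EuclideanSpace ℂ (Fin N)) (m : ℕ) (hm : m ≤ N)
    (hli : LinearIndependent ℂ (fun i : Fin m => gtrans χ (Fin.castLE hm i) g)) :
    ∃ l : Fin m → Fin N, Function.Injective l ∧ ∀ k : Fin m, gft χ g (l k) ≠ 0 := by
  classical
  set S : Finset (Fin N) := Finset.univ.filter (fun l => gft χ g l ≠ 0) with hS
  have hmem : ∀ i : Fin N, gtrans χ i g ∈ Submodule.span ℂ (χ '' ↑S) := by
    intro i
    have heq : gtrans χ i g =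
        ∑ l ∈ S, ((Real.sqrt N : ℂ) * (gft χ g l * conj (χ l i))) • χ l := by
      ext n
      have h1 : (∑ l ∈ S, ((Real.sqrt N : ℂ) * (gft χ g l * conj (χ l i))) • χ l) n
          = ∑ l ∈ S, ((Real.sqrt N : ℂ) * (gft χ g l * conj (χ l i))) * χ l n := by
        rw [euclidean_sum_apply]
        simp [smul_eq_mul]
      rw [h1]
      have h2 : ∑ l ∈ S, ((Real.sqrt N : ℂ) * (gft χ g l * conj (χ l i))) * χ l n
          = ∑ l ∈ Finset.univ, ((Real.sqrt N : ℂ) * (gft χ g l * conj (χ l i))) * χ l n := by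
        apply Finset.sum_subset (Finset.subset_univ S)
        intro l _ hl
        have : gft χ g l = 0 := by simpa [hS] using hl
        simp [this]
      rw [h2]
      simp only [gtrans, PiLp.toLp_apply, Finset.mul_sum]
      apply Finset.sum_congr rfl
      intro l _
      ring
    rw [heq]
    apply Submodule.sum_mem
    intro l hl
    exact Submodule.smul_mem _ _ (Submodule.subset_span ⟨l, by simpa using hl, rfl⟩)
  have hcard : m ≤ S.card := by
    have h1 : LinearIndependent ℂ (fun i : Fin m =>
        (⟨gtrans χ (Fin.castLE hm i) g, hmem _⟩ : Submodule.span ℂ (χ '' ↑S))) :=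
      LinearIndependent.of_comp (Submodule.span ℂ (χ '' ↑S)).subtype hli
    have h2 := h1.fintype_card_le_finrank
    have h3 : Module.finrank ℂ (Submodule.span ℂ (χ '' ↑S)) ≤ S.card := by
      have h4 := finrank_span_finset_le_card (R := ℂ) (S.image χ)
      rw [Finset.coe_image] at h4
      exact le_trans h4 Finset.card_image_le
    simpa using le_trans h2 h3
  have hcard' : Fintype.card (Fin m) ≤ Fintype.card {x // x ∈ S} := by
    simpa using hcard
  obtain ⟨e⟩ := Function.Embedding.nonempty_of_card_le hcard'
  refine ⟨fun k => (e k : Fin N), ?_, ?_⟩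
  · intro a b hab
    exact e.injective (Subtype.ext hab)
  · intro k
    have := (e k).2
    exact (Finset.mem_filter.mp this).2
end

section
/- Let g ∈ ℂ^N be such that |ĝ(l)| = 1/√N for all 1 ≤ l ≤ N. Then for every m ≤ N, the collection {T_i g : 1 ≤ i ≤ m} is an orthonormal system in ℂ^N. -/
open scoped ComplexConjugate BigOperators

/-- `gtrans` as a linear combination of the basis vectors. -/
lemma gtrans_eq_sum {N : ℕ} (χ : Fin N → EuclideanSpace ℂ (Fin N))
    (i : Fin N) (f : EuclideanSpace ℂ (Fin N)) :
    gtrans χ i f = ∑ l, ((Real.sqrt N : ℂ) * gft χ f l * conj (χ l i)) • χ l := by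
  ext n
  simp only [gtrans, PiLp.toLp_apply, WithLp.ofLp_sum, WithLp.ofLp_smul, Finset.sum_apply,
    Pi.smul_apply, smul_eq_mul, Finset.mul_sum]
  exact Finset.sum_congr rfl fun l _ => by ring

/-- Inner product of two linear combinations of an orthonormal family. -/
lemma inner_sum_smul_sum_smul {N : ℕ} {χ : Fin N → EuclideanSpace ℂ (Fin N)}
    (hχ : Orthonormal ℂ χ) (c d : Fin N → ℂ) :
    inner (𝕜 := ℂ) (∑ l, c l • χ l) (∑ l, d l • χ l) = ∑ l, (starRingEnd ℂ) (c l) * d l := by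
  rw [inner_sum]
  simp_rw [sum_inner, inner_smul_left, inner_smul_right, orthonormal_iff_ite.1 hχ]
  simp [mul_ite, Finset.sum_ite_eq, mul_comm]

/-- If `|ĝ(l)| = 1/√N` for all `l`, then `{T_i g : 1 ≤ i ≤ m}` is an orthonormal
system for every `m ≤ N`. -/
theorem translates_orthonormal_of_abs_eq {N : ℕ} (hN : 0 < N)
    (χ : Fin N → EuclideanSpace ℂ (Fin N)) (hχ : Orthonormal ℂ χ)
    (hspan : Submodule.span ℂ (Set.range χ) = ⊤)
    (g : EuclideanSpace ℂ (Fin N))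
    (hg : ∀ l : Fin N, ‖gft χ g l‖ = 1 / Real.sqrt N) :
    ∀ m : ℕ, ∀ hm : m ≤ N,
      Orthonormal ℂ (fun i : Fin m => gtrans χ (Fin.castLE hm i) g) := by
  have hsq : ((Real.sqrt N : ℂ)) * (Real.sqrt N : ℂ) = (N : ℂ) := by
    rw [← Complex.ofReal_mul, Real.mul_self_sqrt (Nat.cast_nonneg N)]
    norm_cast
  have hNne : (N : ℂ) ≠ 0 := by exact_mod_cast hN.ne'
  -- orthonormal basis from χ
  let b : OrthonormalBasis (Fin N) ℂ (EuclideanSpace ℂ (Fin N)) :=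
    OrthonormalBasis.mk hχ (by rw [hspan])
  have hb : ⇑b = χ := OrthonormalBasis.coe_mk _ _
  have key : ∀ i j : Fin N,
      inner ℂ (gtrans χ i g) (gtrans χ j g) = (if i = j then (1 : ℂ) else 0) := by
    intro i j
    rw [gtrans_eq_sum, gtrans_eq_sum, inner_sum_smul_sum_smul hχ]
    have habs : ∀ l : Fin N, (starRingEnd ℂ) (gft χ g l) * gft χ g l = 1 / (N : ℂ) := by
      intro l
      rw [mul_comm, Complex.mul_conj, Complex.normSq_eq_norm_sq, hg l]
      push_cast
      rw [div_pow, one_pow, sq, hsq]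
    have hterm : ∀ l : Fin N,
        (starRingEnd ℂ) ((Real.sqrt N : ℂ) * gft χ g l * (starRingEnd ℂ) (χ l i)) *
          ((Real.sqrt N : ℂ) * gft χ g l * (starRingEnd ℂ) (χ l j)) =
        χ l i * (starRingEnd ℂ) (χ l j) := by
      intro l
      simp only [map_mul, Complex.conj_conj, Complex.conj_ofReal]
      have : ((Real.sqrt N : ℂ)) * ((starRingEnd ℂ) (gft χ g l)) * (χ l i) *
          ((Real.sqrt N : ℂ) * gft χ g l * (starRingEnd ℂ) (χ l j)) =
          ((Real.sqrt N : ℂ) * (Real.sqrt N : ℂ)) *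
            ((starRingEnd ℂ) (gft χ g l) * gft χ g l) *
            (χ l i * (starRingEnd ℂ) (χ l j)) := by ring
      rw [this, hsq, habs l, mul_one_div, div_self hNne, one_mul]
    rw [Finset.sum_congr rfl fun l _ => hterm l]
    -- Parseval: ∑ l, χ l i * conj (χ l j) = ⟪e_i, e_j⟫
    have hpars := b.sum_inner_mul_inner (EuclideanSpace.single i (1 : ℂ))
      (EuclideanSpace.single j (1 : ℂ))
    simp only [hb, EuclideanSpace.inner_single_left, EuclideanSpace.inner_single_right,
      map_one, one_mul, mul_one] at hpars
    rw [hpars]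
    simp [EuclideanSpace.single_apply, apply_ite (starRingEnd ℂ), eq_comm]
  intro m hm
  rw [orthonormal_iff_ite]
  intro i j
  rw [key]
  simp [Fin.castLE_inj]
end

section
/- Let g ∈ ℂ^N and m ≤ N. If the collection {T_i g : 1 ≤ i ≤ m} is an orthonormal system in ℂ^N, then there exist m distinct indices l_1, …, l_m in {1, …, N} such that |ĝ(l_k)| > 0 for all k = 1, …, m. -/
open scoped ComplexConjugate BigOperators

/-- If `{T_i g : 1 ≤ i ≤ m}` is an orthonormal system, then there exist `m` distinct
indices `l_1, …, l_m` with `|ĝ(l_k)| > 0`. -/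
theorem translates_orthonormal_necessary {N : ℕ} (hN : 0 < N)
    (χ : Fin N → EuclideanSpace ℂ (Fin N)) (hχ : Orthonormal ℂ χ)
    (hspan : Submodule.span ℂ (Set.range χ) = ⊤)
    (g : EuclideanSpace ℂ (Fin N)) (m : ℕ) (hm : m ≤ N)
    (hon : Orthonormal ℂ (fun i : Fin m => gtrans χ (Fin.castLE hm i) g)) :
    ∃ l : Fin m → Fin N, Function.Injective l ∧
      ∀ k : Fin m, 0 < ‖gft χ g (l k)‖ := by
  classical
  set S : Finset (Fin N) := Finset.univ.filter (fun l => gft χ g l ≠ 0) with hSdef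
  set V : Submodule ℂ (EuclideanSpace ℂ (Fin N)) :=
    Submodule.span ℂ ((S.image χ : Finset _) : Set _) with hVdef
  have hmem : ∀ i : Fin N, gtrans χ i g ∈ V := by
    intro i
    have hrepr : gtrans χ i g
        = ∑ l ∈ S, ((Real.sqrt N : ℂ) * (gft χ g l * conj (χ l i))) • χ l := by
      ext n
      have h1 : gtrans χ i g n
          = ∑ l, (Real.sqrt N : ℂ) * (gft χ g l * conj (χ l i)) * χ l n := by
        simp only [gtrans, PiLp.toLp_apply, Finset.mul_sum]
        congr 1; funext l; ring
      have h2 : (∑ l ∈ S, ((Real.sqrt N : ℂ) * (gft χ g l * conj (χ l i))) • χ l) n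
          = ∑ l ∈ S, (Real.sqrt N : ℂ) * (gft χ g l * conj (χ l i)) * χ l n := by
        rw [WithLp.ofLp_sum, Finset.sum_apply]
        simp only [PiLp.smul_apply, smul_eq_mul]
      rw [h1, h2, ← Finset.sum_filter_of_ne (p := fun l => gft χ g l ≠ 0)]
      intro x _ hx h0
      apply hx
      simp [h0]
    rw [hrepr]
    apply Submodule.sum_mem
    intro l hl
    exact Submodule.smul_mem _ _ (Submodule.subset_span (by
      simp only [Finset.coe_image, Set.mem_image, Finset.mem_coe]
      exact ⟨l, hl, rfl⟩))
  have hli := hon.linearIndependent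
  set b : Fin m → V := fun i => ⟨gtrans χ (Fin.castLE hm i) g, hmem _⟩ with hbdef
  have hlib : LinearIndependent ℂ b := by
    apply LinearIndependent.of_comp V.subtype
    exact hli
  have hcard : m ≤ S.card := by
    have h1 : Fintype.card (Fin m) ≤ Module.finrank ℂ V :=
      hlib.fintype_card_le_finrank
    have h2 : Module.finrank ℂ V ≤ (S.image χ).card :=
      finrank_span_finset_le_card _
    have h3 : (S.image χ).card ≤ S.card := Finset.card_image_le
    simpa using h1.trans (h2.trans h3)
  refine ⟨fun k => (S.orderIsoOfFin rfl (Fin.castLE hcard k) : Fin N), ?_, ?_⟩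
  · intro a b hab
    have := Subtype.val_injective hab
    have := (S.orderIsoOfFin rfl).injective this
    exact Fin.castLE_injective hcard this
  · intro k
    have hk : ((S.orderIsoOfFin rfl (Fin.castLE hcard k) : Fin N)) ∈ S :=
      (S.orderIsoOfFin rfl (Fin.castLE hcard k)).2
    have hk2 := Finset.mem_filter.1 hk
    exact norm_pos_iff.2 hk2.2
end

section
/- Let g_1, …, g_M ∈ ℂ^N and A, B > 0. The family {T_i g_s : 1 ≤ i ≤ N, 1 ≤ s ≤ M} is a frame for ℂ^N with frame bounds A and B if and only if A/N ≤ Σ_{s=1}^M |ĝ_s(l)|² ≤ B/N for all 1 ≤ l ≤ N. -/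
open scoped ComplexConjugate BigOperators

section aux

variable {N : ℕ} {χ : Fin N → EuclideanSpace ℂ (Fin N)}

lemma apply_sum (v : Fin N → EuclideanSpace ℂ (Fin N)) (i : Fin N) :
    (∑ l, v l) i = ∑ l, v l i :=
  map_sum (EuclideanSpace.projₗ (𝕜 := ℂ) i) v Finset.univ

lemma gft_eq_inner (f : EuclideanSpace ℂ (Fin N)) (l : Fin N) :
    gft χ f l = inner ℂ (χ l) f := by
  simp [gft, PiLp.inner_apply, mul_comm]

/-- norm squared of a EuclideanSpace vector as sum of abs squares. -/
lemma norm_sq_eq_sum_abs (v : EuclideanSpace ℂ (Fin N)) :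
    ‖v‖ ^ 2 = ∑ i, ‖v i‖ ^ 2 := by
  rw [EuclideanSpace.norm_eq, Real.sq_sqrt (by positivity)]

lemma sum_abs_combo (hχ : Orthonormal ℂ χ) (c : Fin N → ℂ) :
    ∑ i, ‖∑ l, c l * χ l i‖ ^ 2 = ∑ l, ‖c l‖ ^ 2 := by
  have hv : ∀ i, (∑ l, c l • χ l : EuclideanSpace ℂ (Fin N)) i = ∑ l, c l * χ l i := by
    intro i
    rw [apply_sum]
    simp [PiLp.smul_apply, smul_eq_mul]
  calc ∑ i, ‖∑ l, c l * χ l i‖ ^ 2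
      = ∑ i, ‖(∑ l, c l • χ l : EuclideanSpace ℂ (Fin N)) i‖ ^ 2 := by
        simp_rw [hv]
    _ = ‖(∑ l, c l • χ l : EuclideanSpace ℂ (Fin N))‖ ^ 2 := (norm_sq_eq_sum_abs _).symm
    _ = ∑ l, ‖c l‖ ^ 2 := by
        have h := hχ.inner_sum c c Finset.univ
        rw [inner_self_eq_norm_sq_to_K] at h
        have h3 := congrArg Complex.re h
        simpa [← Complex.ofReal_pow, Complex.re_sum, mul_comm, Complex.mul_conj,
          Complex.normSq_eq_norm_sq] using h3

end aux

/-- `{T_i g_s : 1 ≤ i ≤ N, 1 ≤ s ≤ M}` is a frame for `ℂ^N` with frame bounds `A, B`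
iff `A/N ≤ ∑_s |ĝ_s(l)|² ≤ B/N` for all `l`. -/
theorem translates_multi_frame_iff {N M : ℕ} (hN : 0 < N)
    (χ : Fin N → EuclideanSpace ℂ (Fin N)) (hχ : Orthonormal ℂ χ)
    (hspan : Submodule.span ℂ (Set.range χ) = ⊤)
    (g : Fin M → EuclideanSpace ℂ (Fin N)) (A B : ℝ) (hA : 0 < A) (hB : 0 < B) :
    (∀ f : EuclideanSpace ℂ (Fin N),
        A * ‖f‖ ^ 2 ≤ ∑ i : Fin N, ∑ s : Fin M,
            ‖∑ n, f n * conj (gtrans χ i (g s) n)‖ ^ 2 ∧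
        ∑ i : Fin N, ∑ s : Fin M,
            ‖∑ n, f n * conj (gtrans χ i (g s) n)‖ ^ 2 ≤ B * ‖f‖ ^ 2) ↔
    (∀ l : Fin N,
        A / N ≤ ∑ s : Fin M, ‖gft χ (g s) l‖ ^ 2 ∧
        ∑ s : Fin M, ‖gft χ (g s) l‖ ^ 2 ≤ B / N) := by
  set b : OrthonormalBasis (Fin N) ℂ (EuclideanSpace ℂ (Fin N)) :=
    OrthonormalBasis.mk hχ (le_of_eq hspan.symm) with hb
  have hbc : ⇑b = χ := OrthonormalBasis.coe_mk _ _
  -- f = ∑ l, gft χ f l • χ l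
  have hrep : ∀ f : EuclideanSpace ℂ (Fin N), (∑ l, gft χ f l • χ l) = f := by
    intro f
    calc (∑ l, gft χ f l • χ l) = ∑ l, b.repr f l • b l := by
          refine Finset.sum_congr rfl fun l _ => ?_
          rw [OrthonormalBasis.repr_apply_apply, hbc, gft_eq_inner]
      _ = f := b.sum_repr f
  -- Parseval
  have hpars : ∀ f : EuclideanSpace ℂ (Fin N),
      ‖f‖ ^ 2 = ∑ l, ‖gft χ f l‖ ^ 2 := by
    intro f
    conv_lhs => rw [← hrep f]
    rw [norm_sq_eq_sum_abs]
    have hv : ∀ i, (∑ l, gft χ f l • χ l : EuclideanSpace ℂ (Fin N)) i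
        = ∑ l, gft χ f l * χ l i := by
      intro i; rw [apply_sum]; simp [PiLp.smul_apply, smul_eq_mul]
    simp_rw [hv]
    exact sum_abs_combo hχ _
  set w : Fin N → ℝ := fun l => ∑ s, ‖gft χ (g s) l‖ ^ 2 with hw
  have hwnn : ∀ l, 0 ≤ w l := by intro l; positivity
  -- inner product with translate
  have h1 : ∀ (i : Fin N) (gs : EuclideanSpace ℂ (Fin N)) (f : EuclideanSpace ℂ (Fin N)),
      (∑ n, f n * conj (gtrans χ i gs n))
        = (Real.sqrt N : ℂ) * ∑ l, (gft χ f l * conj (gft χ gs l)) * χ l i := by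
    intro i gs f
    calc ∑ n, f n * conj (gtrans χ i gs n)
        = ∑ n, ∑ l, (Real.sqrt N : ℂ) *
            (conj (gft χ gs l) * χ l i * (f n * conj (χ l n))) := by
          refine Finset.sum_congr rfl fun n _ => ?_
          simp only [gtrans, map_mul, map_sum, Complex.conj_conj, Complex.conj_ofReal]
          rw [Finset.mul_sum, Finset.mul_sum]
          exact Finset.sum_congr rfl fun l _ => by ring
      _ = ∑ l, ∑ n, (Real.sqrt N : ℂ) *
            (conj (gft χ gs l) * χ l i * (f n * conj (χ l n))) := Finset.sum_comm
      _ = (Real.sqrt N : ℂ) * ∑ l, (gft χ f l * conj (gft χ gs l)) * χ l i := by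
          rw [Finset.mul_sum]
          refine Finset.sum_congr rfl fun l _ => ?_
          simp only [gft]
          rw [← Finset.mul_sum, ← Finset.mul_sum]
          ring
  -- key identity
  have key : ∀ f : EuclideanSpace ℂ (Fin N),
      (∑ i : Fin N, ∑ s : Fin M,
          ‖∑ n, f n * conj (gtrans χ i (g s) n)‖ ^ 2)
        = N * ∑ l, ‖gft χ f l‖ ^ 2 * w l := by
    intro f
    rw [Finset.sum_comm]
    have hsq : (Real.sqrt N : ℝ) ^ 2 = N := Real.sq_sqrt (Nat.cast_nonneg N)
    calc ∑ s : Fin M, ∑ i : Fin N,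
          ‖∑ n, f n * conj (gtrans χ i (g s) n)‖ ^ 2
        = ∑ s : Fin M, ∑ i : Fin N, (N : ℝ) *
            ‖∑ l, (gft χ f l * conj (gft χ (g s) l)) * χ l i‖ ^ 2 := by
          refine Finset.sum_congr rfl fun s _ => Finset.sum_congr rfl fun i _ => ?_
          rw [h1 i (g s) f, norm_mul, mul_pow, Complex.norm_real, Real.norm_eq_abs,
            abs_of_nonneg (Real.sqrt_nonneg _), hsq]
      _ = ∑ s : Fin M, (N : ℝ) *
            ∑ l, ‖gft χ f l * conj (gft χ (g s) l)‖ ^ 2 := by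
          refine Finset.sum_congr rfl fun s _ => ?_
          rw [← Finset.mul_sum, sum_abs_combo hχ]
      _ = N * ∑ l, ‖gft χ f l‖ ^ 2 * w l := by
          rw [← Finset.mul_sum]
          congr 1
          rw [Finset.sum_comm]
          refine Finset.sum_congr rfl fun l _ => ?_
          rw [hw, Finset.mul_sum]
          refine Finset.sum_congr rfl fun s _ => ?_
          rw [norm_mul, Complex.norm_conj, mul_pow]
  have hN' : (0 : ℝ) < N := by exact_mod_cast hN
  constructor
  · intro h l
    obtain ⟨hlo, hhi⟩ := h (χ l)
    have hgft : ∀ l', gft χ (χ l) l' = if l' = l then 1 else 0 := by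
      intro l'
      rw [gft_eq_inner]
      rcases eq_or_ne l' l with rfl | hne
      · simp [orthonormal_iff_ite.mp hχ, hχ.1 l']
      · simp [orthonormal_iff_ite.mp hχ, hne]
    have hnorm : ‖(χ l : EuclideanSpace ℂ (Fin N))‖ ^ 2 = 1 := by
      rw [hpars]
      rw [Finset.sum_eq_single l]
      · simp [hgft]
      · intro l' _ hne; simp [hgft, hne]
      · intro hmem; exact absurd (Finset.mem_univ l) hmem
    have hsum : (∑ l', ‖gft χ (χ l) l'‖ ^ 2 * w l') = w l := by
      rw [Finset.sum_eq_single l]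
      · simp [hgft]
      · intro l' _ hne; simp [hgft, hne]
      · intro h; exact absurd (Finset.mem_univ l) h
    rw [key, hsum, hnorm, mul_one] at hlo hhi
    constructor
    · rw [div_le_iff₀ hN']; linarith [hlo]
    · rw [le_div_iff₀ hN']; linarith [hhi]
  · intro h f
    rw [key, hpars]
    constructor
    · rw [Finset.mul_sum, Finset.mul_sum]
      refine Finset.sum_le_sum fun l _ => ?_
      have := (h l).1
      have hp : (0:ℝ) ≤ ‖gft χ f l‖ ^ 2 := by positivity
      have : A / N * ‖gft χ f l‖ ^ 2 ≤ w l * ‖gft χ f l‖ ^ 2 :=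
        mul_le_mul_of_nonneg_right this hp
      calc A * ‖gft χ f l‖ ^ 2
          = (N:ℝ) * (A / N * ‖gft χ f l‖ ^ 2) := by field_simp
        _ ≤ (N:ℝ) * (w l * ‖gft χ f l‖ ^ 2) := by
            exact mul_le_mul_of_nonneg_left this (le_of_lt hN')
        _ = (N:ℝ) * (‖gft χ f l‖ ^ 2 * w l) := by ring
    · rw [Finset.mul_sum, Finset.mul_sum]
      refine Finset.sum_le_sum fun l _ => ?_
      have := (h l).2
      have hp : (0:ℝ) ≤ ‖gft χ f l‖ ^ 2 := by positivity
      have : w l * ‖gft χ f l‖ ^ 2 ≤ B / N * ‖gft χ f l‖ ^ 2 :=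
        mul_le_mul_of_nonneg_right this hp
      calc (N:ℝ) * (‖gft χ f l‖ ^ 2 * w l)
          = (N:ℝ) * (w l * ‖gft χ f l‖ ^ 2) := by ring
        _ ≤ (N:ℝ) * (B / N * ‖gft χ f l‖ ^ 2) :=
            mul_le_mul_of_nonneg_left this (le_of_lt hN')
        _ = B * ‖gft χ f l‖ ^ 2 := by field_simp
end

section
/- Let λ_1, …, λ_N be real numbers, let G : ℝ → ℂ, let J be a finite subset of the positive reals, and for each s ∈ J let g_s ∈ ℂ^N be the vector whose graph Fourier transform satisfies ĝ_s(l) = G(s·λ_l) for all 1 ≤ l ≤ N (i.e., g_s is the dilation D_s g). Let A, B > 0. Then the spectral graph wavelet system {T_i g_s : 1 ≤ i ≤ N, s ∈ J} is a frame for ℂ^N with frame bounds A and B if and only if A/N ≤ Σ_{s∈J} |G(s·λ_l)|² ≤ B/N for all 1 ≤ l ≤ N. -/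
open scoped ComplexConjugate BigOperators

lemma horth {N : ℕ} (χ : Fin N → EuclideanSpace ℂ (Fin N)) (hχ : Orthonormal ℂ χ)
    (l l' : Fin N) : ∑ i, χ l i * conj (χ l' i) = if l = l' then (1:ℂ) else 0 := by
  have h := orthonormal_iff_ite.mp hχ l' l
  simp only [PiLp.inner_apply, RCLike.inner_apply] at h
  rw [h]
  simp [eq_comm]

lemma sum_normSq_eq {N : ℕ} (χ : Fin N → EuclideanSpace ℂ (Fin N)) (hχ : Orthonormal ℂ χ)
    (a : Fin N → ℂ) :
    ∑ i, Complex.normSq (∑ l, a l * χ l i) = ∑ l, Complex.normSq (a l) := by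
  have key : ∑ i, ((∑ l, a l * χ l i) * conj (∑ l, a l * χ l i)) = ∑ l, (a l * conj (a l)) := by
    calc ∑ i, ((∑ l, a l * χ l i) * conj (∑ l, a l * χ l i))
        = ∑ i, ∑ l, ∑ l', (a l * conj (a l')) * (χ l i * conj (χ l' i)) := by
          refine Finset.sum_congr rfl fun i _ => ?_
          rw [map_sum, Finset.sum_mul_sum]
          exact Finset.sum_congr rfl fun l _ => Finset.sum_congr rfl fun l' _ => by
            rw [map_mul]; ring
      _ = ∑ l, ∑ i, ∑ l', (a l * conj (a l')) * (χ l i * conj (χ l' i)) := Finset.sum_comm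
      _ = ∑ l, ∑ l', ∑ i, (a l * conj (a l')) * (χ l i * conj (χ l' i)) :=
          Finset.sum_congr rfl fun l _ => Finset.sum_comm
      _ = ∑ l, ∑ l', (a l * conj (a l')) * ∑ i, (χ l i * conj (χ l' i)) := by
          simp [Finset.mul_sum]
      _ = ∑ l, (a l * conj (a l)) := by
          refine Finset.sum_congr rfl fun l _ => ?_
          simp [horth χ hχ, Finset.sum_ite_eq]
  have h2 : ((∑ i, Complex.normSq (∑ l, a l * χ l i) : ℝ) : ℂ)
      = ((∑ l, Complex.normSq (a l) : ℝ) : ℂ) := by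
    push_cast [← Complex.mul_conj]
    exact key
  exact_mod_cast h2

lemma coef_eq {N : ℕ} (χ : Fin N → EuclideanSpace ℂ (Fin N))
    (c : Fin N → ℂ) (gs f : EuclideanSpace ℂ (Fin N)) (i : Fin N)
    (hg : ∀ l : Fin N, gft χ gs l = c l) :
    (∑ n, f n * conj (gtrans χ i gs n))
      = ∑ l, ((Real.sqrt N : ℂ) * conj (c l) * gft χ f l) * χ l i := by
  simp only [gtrans, map_mul, map_sum, Complex.conj_conj, Complex.conj_ofReal, hg]
  calc ∑ n, f n * ((Real.sqrt N : ℂ) * ∑ l, conj (c l) * χ l i * conj (χ l n))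
      = ∑ n, ∑ l, ((Real.sqrt N : ℂ) * conj (c l) * χ l i) * (f n * conj (χ l n)) := by
        refine Finset.sum_congr rfl fun n _ => ?_
        rw [Finset.mul_sum, Finset.mul_sum]
        exact Finset.sum_congr rfl fun l _ => by ring
    _ = ∑ l, ∑ n, ((Real.sqrt N : ℂ) * conj (c l) * χ l i) * (f n * conj (χ l n)) :=
        Finset.sum_comm
    _ = ∑ l, ((Real.sqrt N : ℂ) * conj (c l) * gft χ f l) * χ l i := by
        refine Finset.sum_congr rfl fun l _ => ?_
        rw [← Finset.mul_sum]
        simp only [gft]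
        ring

/-- The spectral graph wavelet system `{T_i D_s g : 1 ≤ i ≤ N, s ∈ J}` is a frame for
`ℂ^N` with frame bounds `A, B` iff `A/N ≤ ∑_{s∈J} |G(s·λ_l)|² ≤ B/N` for all `l`. -/
theorem wavelet_system_frame_iff {N : ℕ} (hN : 0 < N)
    (χ : Fin N → EuclideanSpace ℂ (Fin N)) (hχ : Orthonormal ℂ χ)
    (hspan : Submodule.span ℂ (Set.range χ) = ⊤)
    (lam : Fin N → ℝ) (G : ℝ → ℂ) (J : Finset ℝ) (hJ : ∀ s ∈ J, 0 < s)
    (g : ℝ → EuclideanSpace ℂ (Fin N))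
    (hg : ∀ s ∈ J, ∀ l : Fin N, gft χ (g s) l = G (s * lam l))
    (A B : ℝ) (hA : 0 < A) (hB : 0 < B) :
    (∀ f : EuclideanSpace ℂ (Fin N),
        A * ‖f‖ ^ 2 ≤ ∑ i : Fin N, ∑ s ∈ J,
            ‖∑ n, f n * conj (gtrans χ i (g s) n)‖ ^ 2 ∧
        ∑ i : Fin N, ∑ s ∈ J,
            ‖∑ n, f n * conj (gtrans χ i (g s) n)‖ ^ 2 ≤ B * ‖f‖ ^ 2) ↔
    (∀ l : Fin N,
        A / N ≤ ∑ s ∈ J, ‖G (s * lam l)‖ ^ 2 ∧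
        ∑ s ∈ J, ‖G (s * lam l)‖ ^ 2 ≤ B / N) := by
  have hN' : (0:ℝ) < N := Nat.cast_pos.mpr hN
  -- the total frame sum
  have hS : ∀ f : EuclideanSpace ℂ (Fin N),
      ∑ i : Fin N, ∑ s ∈ J, ‖∑ n, f n * conj (gtrans χ i (g s) n)‖ ^ 2
        = (N : ℝ) * ∑ l, (∑ s ∈ J, ‖G (s * lam l)‖ ^ 2)
            * ‖gft χ f l‖ ^ 2 := by
    intro f
    have hper : ∀ s ∈ J,
        ∑ i : Fin N, ‖∑ n, f n * conj (gtrans χ i (g s) n)‖ ^ 2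
          = ∑ l, (N : ℝ) * ‖G (s * lam l)‖ ^ 2 * ‖gft χ f l‖ ^ 2 := by
      intro s hs
      have h1 : ∀ i, (∑ n, f n * conj (gtrans χ i (g s) n))
          = ∑ l, ((Real.sqrt N : ℂ) * conj (G (s * lam l)) * gft χ f l) * χ l i :=
        fun i => coef_eq χ (fun l => G (s * lam l)) (g s) f i (hg s hs)
      calc ∑ i : Fin N, ‖∑ n, f n * conj (gtrans χ i (g s) n)‖ ^ 2
          = ∑ i : Fin N, Complex.normSq
              (∑ l, ((Real.sqrt N : ℂ) * conj (G (s * lam l)) * gft χ f l) * χ l i) := by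
            simp [h1, Complex.sq_norm]
        _ = ∑ l, Complex.normSq ((Real.sqrt N : ℂ) * conj (G (s * lam l)) * gft χ f l) :=
            sum_normSq_eq χ hχ _
        _ = ∑ l, (N : ℝ) * ‖G (s * lam l)‖ ^ 2 * ‖gft χ f l‖ ^ 2 := by
            refine Finset.sum_congr rfl fun l _ => ?_
            rw [Complex.normSq_mul, Complex.normSq_mul, Complex.normSq_conj,
              Complex.normSq_ofReal, Real.mul_self_sqrt (Nat.cast_nonneg N),
              ← Complex.sq_norm, ← Complex.sq_norm]
    calc ∑ i : Fin N, ∑ s ∈ J, ‖∑ n, f n * conj (gtrans χ i (g s) n)‖ ^ 2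
        = ∑ s ∈ J, ∑ i : Fin N, ‖∑ n, f n * conj (gtrans χ i (g s) n)‖ ^ 2 :=
          Finset.sum_comm
      _ = ∑ s ∈ J, ∑ l, (N : ℝ) * ‖G (s * lam l)‖ ^ 2
            * ‖gft χ f l‖ ^ 2 := Finset.sum_congr rfl hper
      _ = ∑ l, ∑ s ∈ J, (N : ℝ) * ‖G (s * lam l)‖ ^ 2
            * ‖gft χ f l‖ ^ 2 := Finset.sum_comm
      _ = (N : ℝ) * ∑ l, (∑ s ∈ J, ‖G (s * lam l)‖ ^ 2)
            * ‖gft χ f l‖ ^ 2 := by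
          rw [Finset.mul_sum]
          refine Finset.sum_congr rfl fun l _ => ?_
          simp only [Finset.sum_mul, Finset.mul_sum]
          exact Finset.sum_congr rfl fun s _ => by ring
  -- Parseval
  have hgft_inner : ∀ (f : EuclideanSpace ℂ (Fin N)) (l : Fin N),
      gft χ f l = @inner ℂ _ _ (χ l) f := by
    intro f l
    simp [gft, PiLp.inner_apply, RCLike.inner_apply, mul_comm]
  let b : OrthonormalBasis (Fin N) ℂ (EuclideanSpace ℂ (Fin N)) :=
    OrthonormalBasis.mk hχ (le_of_eq hspan.symm)
  have hPar : ∀ f : EuclideanSpace ℂ (Fin N),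
      ‖f‖ ^ 2 = ∑ l, ‖gft χ f l‖ ^ 2 := by
    intro f
    have h1 : ‖f‖ = ‖b.repr f‖ := (b.repr.norm_map f).symm
    rw [h1, EuclideanSpace.norm_eq, Real.sq_sqrt (by positivity)]
    refine Finset.sum_congr rfl fun l _ => ?_
    rw [b.repr_apply_apply, show b l = χ l from congrFun (OrthonormalBasis.coe_mk _ _) l,
      ← hgft_inner]
  constructor
  · intro H l
    have h := H (χ l)
    rw [hS (χ l), hPar (χ l)] at h
    have hgl : ∀ l', gft χ (χ l) l' = if l = l' then (1:ℂ) else 0 := by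
      intro l'
      simpa [gft] using horth χ hχ l l'
    have hsum : ∀ w : Fin N → ℝ, ∑ l', w l' * ‖gft χ (χ l) l'‖ ^ 2 = w l := by
      intro w
      simp [hgl, apply_ite (‖·‖ : ℂ → ℝ), Finset.sum_ite_eq]
    have h1 : ∑ l', ‖gft χ (χ l) l'‖ ^ 2 = 1 := by
      simp [hgl, apply_ite (‖·‖ : ℂ → ℝ), Finset.sum_ite_eq]
    rw [hsum, h1] at h
    constructor
    · rw [div_le_iff₀ hN']; nlinarith [h.1]
    · rw [le_div_iff₀ hN']; nlinarith [h.2]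
  · intro h f
    rw [hS f, hPar f]
    constructor
    · rw [Finset.mul_sum, Finset.mul_sum]
      refine Finset.sum_le_sum fun l _ => ?_
      have hl := (h l).1
      have hA' : A ≤ (N : ℝ) * (∑ s ∈ J, ‖G (s * lam l)‖ ^ 2) := by
        rw [div_le_iff₀ hN'] at hl; linarith
      have hx : (0:ℝ) ≤ ‖gft χ f l‖ ^ 2 := by positivity
      nlinarith
    · rw [Finset.mul_sum, Finset.mul_sum]
      refine Finset.sum_le_sum fun l _ => ?_
      have hl := (h l).2
      have hB' : (N : ℝ) * (∑ s ∈ J, ‖G (s * lam l)‖ ^ 2) ≤ B := by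
        rw [le_div_iff₀ hN'] at hl; linarith
      have hx : (0:ℝ) ≤ ‖gft χ f l‖ ^ 2 := by positivity
      nlinarith
end

section
/- Let g ∈ ℂ^N and A, B > 0. The family {T_i M_s g : 1 ≤ i ≤ N, 1 ≤ s ≤ N} is a frame for ℂ^N with frame bounds A and B if and only if A/N ≤ Σ_{n=1}^N |χ_l(n)|² · |g(n)|² ≤ B/N for all 1 ≤ l ≤ N. -/
open scoped ComplexConjugate BigOperators

/-- Generalized modulation: `(M_s f)(n) = χ_s(n) · f(n)`. -/
noncomputable def gmod {N : ℕ} (χ : Fin N → EuclideanSpace ℂ (Fin N))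
    (s : Fin N) (f : EuclideanSpace ℂ (Fin N)) : EuclideanSpace ℂ (Fin N) :=
  WithLp.toLp 2 (fun n => χ s n * f n)

section Aux

variable {N : ℕ}

private lemma row_orth (χ : Fin N → EuclideanSpace ℂ (Fin N)) (hχ : Orthonormal ℂ χ)
    (l l' : Fin N) : ∑ k, conj (χ l k) * χ l' k = if l = l' then 1 else 0 := by
  have := orthonormal_iff_ite.mp hχ l l'
  simpa [PiLp.inner_apply, RCLike.inner_apply, mul_comm] using this

private lemma col_orth (χ : Fin N → EuclideanSpace ℂ (Fin N)) (hχ : Orthonormal ℂ χ)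
    (n m : Fin N) : ∑ l, conj (χ l n) * χ l m = if n = m then 1 else 0 := by
  classical
  set M : Matrix (Fin N) (Fin N) ℂ := Matrix.of (fun l k => χ l k) with hM
  have h1 : M * M.conjTranspose = 1 := by
    ext i j
    have h' : ∑ k, χ i k * conj (χ j k) = if i = j then 1 else 0 := by
      have := congrArg (starRingEnd ℂ) (row_orth χ hχ i j)
      simpa [map_sum, mul_comm] using this
    simpa [Matrix.mul_apply, Matrix.conjTranspose_apply, hM, Matrix.one_apply] using h'
  have h2 : M.conjTranspose * M = 1 := mul_eq_one_comm.mp h1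
  have := congrFun (congrFun h2 n) m
  simpa [Matrix.mul_apply, Matrix.conjTranspose_apply, hM, Matrix.one_apply] using this

/-- Expansion of the frame coefficient. -/
private lemma step1 (χ : Fin N → EuclideanSpace ℂ (Fin N))
    (h f : EuclideanSpace ℂ (Fin N)) (i : Fin N) :
    ∑ n, f n * conj (gtrans χ i h n)
      = (Real.sqrt N : ℂ) * ∑ l, (conj (gft χ h l) * gft χ f l) * χ l i := by
  simp only [gtrans, map_mul, map_sum, Complex.conj_conj, Complex.conj_ofReal,
    Finset.mul_sum, Finset.sum_mul, gft, PiLp.toLp_apply]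
  rw [Finset.sum_comm]
  apply Finset.sum_congr rfl
  intro l _
  apply Finset.sum_congr rfl
  intro n _
  apply Finset.sum_congr rfl
  intro x _
  ring

/-- Summation over the translation index, via orthonormality of the rows. -/
private lemma step2 (χ : Fin N → EuclideanSpace ℂ (Fin N)) (hχ : Orthonormal ℂ χ)
    (a : Fin N → ℂ) :
    ∑ i, ((Real.sqrt N : ℂ) * ∑ l, a l * χ l i) * conj ((Real.sqrt N : ℂ) * ∑ l, a l * χ l i)
      = (N : ℂ) * ∑ l, a l * conj (a l) := by
  have row := row_orth χ hχ
  have hsq : (Real.sqrt N : ℂ) * (Real.sqrt N : ℂ) = (N : ℂ) := by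
    rw [← Complex.ofReal_mul, Real.mul_self_sqrt (Nat.cast_nonneg N)]
    simp
  have key : ∀ i, ((Real.sqrt N : ℂ) * ∑ l, a l * χ l i) * conj ((Real.sqrt N : ℂ) * ∑ l, a l * χ l i)
      = (N : ℂ) * ∑ l, ∑ l', a l * conj (a l') * (χ l i * conj (χ l' i)) := by
    intro i
    rw [map_mul, Complex.conj_ofReal, map_sum]
    rw [show ∀ w x y z : ℂ, (w * x) * (y * z) = (w * y) * (x * z) by intros; ring]
    rw [hsq, Finset.sum_mul_sum]
    congr 1
    apply Finset.sum_congr rfl; intro l _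
    apply Finset.sum_congr rfl; intro l' _
    rw [map_mul]; ring
  simp only [key, ← Finset.mul_sum]
  congr 1
  rw [Finset.sum_comm (γ := Fin N)]
  apply Finset.sum_congr rfl; intro l _
  rw [Finset.sum_comm]
  have : ∀ l', ∑ i, a l * conj (a l') * (χ l i * conj (χ l' i))
      = a l * conj (a l') * (if l' = l then 1 else 0) := by
    intro l'
    rw [← Finset.mul_sum]
    congr 1
    rw [← row l' l]
    apply Finset.sum_congr rfl; intro k _; ring
  simp only [this]
  simp [Finset.sum_ite_eq, mul_comm]

/-- A Parseval-type identity for any family `ψ` with orthonormal "columns". -/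
private lemma step3 (ψ : Fin N → Fin N → ℂ)
    (col : ∀ n m : Fin N, ∑ s, conj (ψ s n) * ψ s m = if n = m then 1 else 0)
    (w : Fin N → ℂ) :
    ∑ s, (∑ n, w n * ψ s n) * conj (∑ n, w n * ψ s n) = ∑ n, w n * conj (w n) := by
  have key : ∀ s, (∑ n, w n * ψ s n) * conj (∑ n, w n * ψ s n)
      = ∑ n, ∑ m, w n * conj (w m) * (ψ s n * conj (ψ s m)) := by
    intro s
    rw [map_sum, Finset.sum_mul_sum]
    apply Finset.sum_congr rfl; intro n _
    apply Finset.sum_congr rfl; intro m _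
    rw [map_mul]; ring
  simp only [key]
  rw [Finset.sum_comm (γ := Fin N)]
  apply Finset.sum_congr rfl; intro n _
  rw [Finset.sum_comm]
  have : ∀ m, ∑ s, w n * conj (w m) * (ψ s n * conj (ψ s m))
      = w n * conj (w m) * (if m = n then 1 else 0) := by
    intro m
    rw [← Finset.mul_sum]
    congr 1
    rw [show (∑ s, ψ s n * conj (ψ s m)) = ∑ s, conj (ψ s m) * ψ s n from
      Finset.sum_congr rfl fun s _ => mul_comm _ _]
    rw [show (∑ s, conj (ψ s m) * ψ s n) = conj (∑ s, conj (ψ s n) * ψ s m) by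
      rw [map_sum]; exact Finset.sum_congr rfl fun s _ => by rw [map_mul, Complex.conj_conj, mul_comm]]
    rw [col n m]
    by_cases h : n = m <;> simp [h, eq_comm]
  simp only [this]
  simp [Finset.sum_ite_eq, mul_comm]

private lemma habs (z : ℂ) : ((‖z‖ : ℝ) : ℂ) ^ 2 = z * conj z := by
  rw [← Complex.ofReal_pow, Complex.sq_norm, Complex.mul_conj]

/-- The full complex-valued frame-operator computation. -/
private lemma key_c (χ : Fin N → EuclideanSpace ℂ (Fin N)) (hχ : Orthonormal ℂ χ)
    (g f : EuclideanSpace ℂ (Fin N)) :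
    ∑ i, ∑ s, (∑ n, f n * conj (gtrans χ i (gmod χ s g) n))
        * conj (∑ n, f n * conj (gtrans χ i (gmod χ s g) n))
      = (N : ℂ) * ∑ l, (∑ n, (g n * conj (χ l n)) * conj (g n * conj (χ l n)))
          * (gft χ f l * conj (gft χ f l)) := by
  simp only [step1 χ _ f]
  rw [Finset.sum_comm]
  have h2 : ∀ s, ∑ i, ((Real.sqrt N : ℂ) * ∑ l,
        (conj (gft χ (gmod χ s g) l) * gft χ f l) * χ l i)
        * conj ((Real.sqrt N : ℂ) * ∑ l, (conj (gft χ (gmod χ s g) l) * gft χ f l) * χ l i)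
      = (N : ℂ) * ∑ l, (conj (gft χ (gmod χ s g) l) * gft χ f l)
          * conj (conj (gft χ (gmod χ s g) l) * gft χ f l) :=
    fun s => step2 χ hχ _
  simp only [h2, ← Finset.mul_sum]
  congr 1
  rw [Finset.sum_comm]
  apply Finset.sum_congr rfl; intro l _
  have : ∀ s, (conj (gft χ (gmod χ s g) l) * gft χ f l)
        * conj (conj (gft χ (gmod χ s g) l) * gft χ f l)
      = (gft χ (gmod χ s g) l * conj (gft χ (gmod χ s g) l))
        * (gft χ f l * conj (gft χ f l)) := by
    intro s
    rw [map_mul, Complex.conj_conj]; ring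
  simp only [this, ← Finset.sum_mul]
  congr 1
  have hg : ∀ s, gft χ (gmod χ s g) l = ∑ n, (g n * conj (χ l n)) * χ s n := by
    intro s
    simp only [gft, PiLp.toLp_apply]
    apply Finset.sum_congr rfl; intro n _
    simp only [gmod, PiLp.toLp_apply]; ring
  simp only [hg]
  exact step3 (fun s n => χ s n) (col_orth χ hχ) _

private lemma sumSq (x : EuclideanSpace ℂ (Fin N)) :
    ‖x‖ ^ 2 = ∑ n, ‖x n‖ ^ 2 := by
  rw [EuclideanSpace.norm_eq, Real.sq_sqrt (by positivity)]

/-- The real-valued key identity. -/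
private lemma key_r (χ : Fin N → EuclideanSpace ℂ (Fin N)) (hχ : Orthonormal ℂ χ)
    (g f : EuclideanSpace ℂ (Fin N)) :
    ∑ i : Fin N, ∑ s : Fin N,
        ‖∑ n, f n * conj (gtrans χ i (gmod χ s g) n)‖ ^ 2
      = N * ∑ l, (∑ n : Fin N, ‖χ l n‖ ^ 2 * ‖g n‖ ^ 2)
          * ‖gft χ f l‖ ^ 2 := by
  apply Complex.ofReal_injective
  push_cast
  simp only [habs]
  rw [key_c χ hχ g f]
  congr 1
  apply Finset.sum_congr rfl; intro l _
  congr 1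
  apply Finset.sum_congr rfl; intro n _
  rw [map_mul, Complex.conj_conj]; ring

/-- Parseval. -/
private lemma parseval (χ : Fin N → EuclideanSpace ℂ (Fin N)) (hχ : Orthonormal ℂ χ)
    (f : EuclideanSpace ℂ (Fin N)) :
    ∑ l, ‖gft χ f l‖ ^ 2 = ‖f‖ ^ 2 := by
  rw [sumSq]
  apply Complex.ofReal_injective
  push_cast
  simp only [habs]
  have col' : ∀ n m : Fin N, ∑ l, conj (conj (χ l n)) * conj (χ l m)
      = if n = m then 1 else 0 := by
    intro n m
    have := congrArg (starRingEnd ℂ) (col_orth χ hχ n m)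
    simp only [map_sum, map_mul, Complex.conj_conj] at this
    rw [show (∑ l, conj (conj (χ l n)) * conj (χ l m)) = ∑ l, χ l n * conj (χ l m) by
      simp [Complex.conj_conj]]
    rw [this]
    by_cases h : n = m <;> simp [h]
  exact step3 (fun l n => conj (χ l n)) col' f

end Aux

/-- `{T_i M_s g : 1 ≤ i, s ≤ N}` is a frame for `ℂ^N` with frame bounds `A, B`
iff `A/N ≤ ∑_n |χ_l(n)|²·|g(n)|² ≤ B/N` for all `l`. -/
theorem modulated_translates_frame_iff {N : ℕ} (hN : 0 < N)
    (χ : Fin N → EuclideanSpace ℂ (Fin N)) (hχ : Orthonormal ℂ χ)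
    (hspan : Submodule.span ℂ (Set.range χ) = ⊤)
    (g : EuclideanSpace ℂ (Fin N)) (A B : ℝ) (hA : 0 < A) (hB : 0 < B) :
    (∀ f : EuclideanSpace ℂ (Fin N),
        A * ‖f‖ ^ 2 ≤ ∑ i : Fin N, ∑ s : Fin N,
            ‖∑ n, f n * conj (gtrans χ i (gmod χ s g) n)‖ ^ 2 ∧
        ∑ i : Fin N, ∑ s : Fin N,
            ‖∑ n, f n * conj (gtrans χ i (gmod χ s g) n)‖ ^ 2 ≤ B * ‖f‖ ^ 2) ↔
    (∀ l : Fin N,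
        A / N ≤ ∑ n : Fin N, ‖χ l n‖ ^ 2 * ‖g n‖ ^ 2 ∧
        ∑ n : Fin N, ‖χ l n‖ ^ 2 * ‖g n‖ ^ 2 ≤ B / N) := by
  have hNR : (0 : ℝ) < N := by exact_mod_cast hN
  set c : Fin N → ℝ := fun l => ∑ n : Fin N, ‖χ l n‖ ^ 2 * ‖g n‖ ^ 2
    with hc
  constructor
  · intro h l₀
    have hkey := key_r χ hχ g (χ l₀)
    have hcollapse : ∑ l, c l * ‖gft χ (χ l₀) l‖ ^ 2 = c l₀ := by
      have hδ : ∀ l, gft χ (χ l₀) l = if l₀ = l then 1 else 0 := by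
        intro l
        have := congrArg (starRingEnd ℂ) (row_orth χ hχ l₀ l)
        simp only [map_sum, map_mul, Complex.conj_conj] at this
        rw [show gft χ (χ l₀) l = ∑ n, χ l₀ n * conj (χ l n) by
          simp only [gft, PiLp.toLp_apply]]
        rw [this]
        by_cases hll : l₀ = l <;> simp [hll]
      simp only [hδ]
      have : ∀ l, c l * ‖(if l₀ = l then (1:ℂ) else 0)‖ ^ 2
          = if l₀ = l then c l else 0 := by
        intro l; by_cases hll : l₀ = l <;> simp [hll]
      simp only [this]
      simp
    have hnorm : ‖χ l₀‖ = 1 := hχ.1 l₀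
    obtain ⟨h1, h2⟩ := h (χ l₀)
    rw [hkey, hnorm] at h1 h2
    rw [hcollapse] at h1 h2
    simp only [one_pow, mul_one] at h1 h2
    constructor
    · rw [div_le_iff₀ hNR]
      linarith [h1]
    · rw [le_div_iff₀ hNR]
      linarith [h2]
  · intro h f
    rw [key_r χ hχ g f, ← parseval χ hχ f]
    have hp : ∀ l, (0:ℝ) ≤ ‖gft χ f l‖ ^ 2 := fun l => by positivity
    constructor
    · rw [Finset.mul_sum, Finset.mul_sum]
      apply Finset.sum_le_sum
      intro l _
      rw [← mul_assoc]
      apply mul_le_mul_of_nonneg_right _ (hp l)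
      have := (h l).1
      rw [div_le_iff₀ hNR] at this
      calc A ≤ c l * N := this
        _ = N * c l := by ring
    · rw [Finset.mul_sum, Finset.mul_sum]
      apply Finset.sum_le_sum
      intro l _
      rw [← mul_assoc]
      apply mul_le_mul_of_nonneg_right _ (hp l)
      have := (h l).2
      rw [le_div_iff₀ hNR] at this
      calc N * c l = c l * N := by ring
        _ ≤ B := this
end

section
/- Let g ∈ ℂ^N and define the frame operator S : ℂ^N → ℂ^N by S f = Σ_{p=1}^N ⟨f, T_p g⟩ · T_p g. Then for every f ∈ ℂ^N and every 1 ≤ l ≤ N, the graph Fourier transform of S f satisfies (S f)^(l) = N · |ĝ(l)|² · f̂(l); consequently S commutes with every generalized translation: S(T_i f) = T_i(S f) for all f ∈ ℂ^N and all 1 ≤ i ≤ N. -/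
open scoped ComplexConjugate BigOperators

/-- The frame operator `S f = ∑_p ⟨f, T_p g⟩ · T_p g` satisfies
`(S f)^(l) = N·|ĝ(l)|²·f̂(l)` and commutes with every generalized translation. -/
theorem frame_operator_gft_and_commutes {N : ℕ} (hN : 0 < N)
    (χ : Fin N → EuclideanSpace ℂ (Fin N)) (hχ : Orthonormal ℂ χ)
    (hspan : Submodule.span ℂ (Set.range χ) = ⊤)
    (g : EuclideanSpace ℂ (Fin N))
    (S : EuclideanSpace ℂ (Fin N) → EuclideanSpace ℂ (Fin N))
    (hS : ∀ f : EuclideanSpace ℂ (Fin N), ∀ n : Fin N,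
        S f n = ∑ p : Fin N, (∑ n', f n' * conj (gtrans χ p g n')) * gtrans χ p g n) :
    (∀ f : EuclideanSpace ℂ (Fin N), ∀ l : Fin N,
        gft χ (S f) l = (N : ℂ) * (‖gft χ g l‖ ^ 2 : ℝ) * gft χ f l) ∧
    (∀ f : EuclideanSpace ℂ (Fin N), ∀ i : Fin N,
        S (gtrans χ i f) = gtrans χ i (S f)) := by
  -- orthonormality in coordinate form
  have orth : ∀ l m : Fin N, (∑ n, χ l n * conj (χ m n)) = if l = m then 1 else 0 := by
    intro l m
    have h := orthonormal_iff_ite.mp hχ m l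
    rw [PiLp.inner_apply] at h
    simp only [RCLike.inner_apply] at h
    rw [show (if l = m then (1:ℂ) else 0) = if m = l then 1 else 0 by
      by_cases hc : l = m
      · simp [hc]
      · rw [if_neg hc, if_neg fun h => hc h.symm]]
    rw [← h]
  have sq : (Real.sqrt N : ℂ) * (Real.sqrt N : ℂ) = (N : ℂ) := by
    rw [← Complex.ofReal_mul, Real.mul_self_sqrt (Nat.cast_nonneg N)]
    norm_cast
  -- delta collapse
  have delta : ∀ (c : Fin N → ℂ) (m : Fin N),
      (∑ l, c l * ∑ n, χ l n * conj (χ m n)) = c m := by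
    intro c m
    rw [Finset.sum_congr rfl fun l _ => by rw [orth l m]]
    simp
  -- GFT of a translation
  have A : ∀ (f : EuclideanSpace ℂ (Fin N)) (i l : Fin N),
      gft χ (gtrans χ i f) l = (Real.sqrt N : ℂ) * (gft χ f l * conj (χ l i)) := by
    intro f i l
    simp only [gft, gtrans, WithLp.ofLp_toLp]
    calc ∑ n, ((Real.sqrt N : ℂ) * ∑ m, (∑ n', f n' * conj (χ m n')) * conj (χ m i) * χ m n)
            * conj (χ l n)
        = (Real.sqrt N : ℂ) * ∑ m, ((∑ n', f n' * conj (χ m n')) * conj (χ m i))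
            * ∑ n, χ m n * conj (χ l n) := by
          simp only [Finset.sum_mul, Finset.mul_sum]
          rw [Finset.sum_comm]
          exact Finset.sum_congr rfl fun m _ => Finset.sum_congr rfl fun n _ =>
            Finset.sum_congr rfl fun x _ => by ring
      _ = (Real.sqrt N : ℂ) * ((∑ n', f n' * conj (χ l n')) * conj (χ l i)) := by
          rw [delta (fun m => (∑ n', f n' * conj (χ m n')) * conj (χ m i)) l]
  -- pointwise formula for S
  have B : ∀ (f : EuclideanSpace ℂ (Fin N)) (n : Fin N),
      S f n = (N : ℂ) * ∑ l, conj (gft χ g l) * gft χ g l * gft χ f l * χ l n := by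
    intro f n
    rw [hS f n]
    have inner_eq : ∀ p : Fin N, (∑ n', f n' * conj (gtrans χ p g n'))
        = (Real.sqrt N : ℂ) * ∑ l, conj (gft χ g l) * χ l p * gft χ f l := by
      intro p
      simp only [gtrans, WithLp.ofLp_toLp]
      calc ∑ n', f n' * conj ((Real.sqrt N : ℂ) * ∑ l, gft χ g l * conj (χ l p) * χ l n')
          = (Real.sqrt N : ℂ) * ∑ l, (conj (gft χ g l) * χ l p) * ∑ n', f n' * conj (χ l n') := by
            simp only [map_mul, map_sum, Finset.mul_sum, Complex.conj_ofReal,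
              RingHomCompTriple.comp_apply, RingHom.id_apply, starRingEnd_self_apply]
            rw [Finset.sum_comm]
            exact Finset.sum_congr rfl fun l _ => Finset.sum_congr rfl fun n' _ => by ring
        _ = (Real.sqrt N : ℂ) * ∑ l, conj (gft χ g l) * χ l p * gft χ f l := by
            simp only [gft, WithLp.ofLp_toLp]
    calc ∑ p, (∑ n', f n' * conj (gtrans χ p g n')) * gtrans χ p g n
        = ∑ p, ((Real.sqrt N : ℂ) * ∑ l, conj (gft χ g l) * χ l p * gft χ f l)
            * ((Real.sqrt N : ℂ) * ∑ m, gft χ g m * conj (χ m p) * χ m n) := by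
          exact Finset.sum_congr rfl fun p _ => by rw [inner_eq p, gtrans, WithLp.ofLp_toLp]
      _ = (N : ℂ) * ∑ p, (∑ l, conj (gft χ g l) * χ l p * gft χ f l)
            * (∑ m, gft χ g m * conj (χ m p) * χ m n) := by
          rw [Finset.mul_sum]
          exact Finset.sum_congr rfl fun p _ => by rw [mul_mul_mul_comm, sq]
      _ = (N : ℂ) * ∑ l, (conj (gft χ g l) * gft χ f l) *
            ∑ m, (gft χ g m * χ m n) * ∑ p, χ l p * conj (χ m p) := by
          congr 1
          simp only [Finset.sum_mul, Finset.mul_sum]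
          rw [Finset.sum_comm]
          conv_rhs => rw [Finset.sum_comm]
          refine Finset.sum_congr rfl fun l _ => ?_
          rw [Finset.sum_comm]
          exact Finset.sum_congr rfl fun m _ => Finset.sum_congr rfl fun p _ => by ring
      _ = (N : ℂ) * ∑ l, conj (gft χ g l) * gft χ g l * gft χ f l * χ l n := by
          congr 1
          refine Finset.sum_congr rfl fun l _ => ?_
          rw [Finset.sum_congr rfl fun m (_ : m ∈ Finset.univ) => by rw [orth l m]]
          have : ∑ m, (gft χ g m * χ m n) * (if l = m then (1:ℂ) else 0)
              = gft χ g l * χ l n := by simp [mul_ite]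
          rw [this]; ring
  have P1 : ∀ (f : EuclideanSpace ℂ (Fin N)) (l : Fin N),
      gft χ (S f) l = (N : ℂ) * (conj (gft χ g l) * gft χ g l) * gft χ f l := by
    intro f l
    simp only [gft, WithLp.ofLp_toLp]
    calc ∑ n, S f n * conj (χ l n)
        = (N : ℂ) * ∑ m, (conj (gft χ g m) * gft χ g m * gft χ f m)
            * ∑ n, χ m n * conj (χ l n) := by
          rw [Finset.mul_sum]
          rw [Finset.sum_congr rfl fun n (_ : n ∈ Finset.univ) => by rw [B f n]]
          simp only [Finset.mul_sum, Finset.sum_mul]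
          rw [Finset.sum_comm]
          exact Finset.sum_congr rfl fun m _ => Finset.sum_congr rfl fun n _ => by ring
      _ = (N : ℂ) * (conj (gft χ g l) * gft χ g l * gft χ f l) := by
          rw [delta (fun m => conj (gft χ g m) * gft χ g m * gft χ f m) l]
      _ = (N : ℂ) * (conj (gft χ g l) * gft χ g l) * gft χ f l := by ring
  constructor
  · intro f l
    have habs : ((‖gft χ g l‖ ^ 2 : ℝ) : ℂ)
        = conj (gft χ g l) * gft χ g l := by
      rw [Complex.sq_norm, Complex.normSq_eq_conj_mul_self]
    rw [P1 f l, habs]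
  · intro f i
    ext n
    calc S (gtrans χ i f) n
        = (N : ℂ) * ∑ l, conj (gft χ g l) * gft χ g l
            * ((Real.sqrt N : ℂ) * (gft χ f l * conj (χ l i))) * χ l n := by
          rw [B (gtrans χ i f) n]
          exact congrArg _ (Finset.sum_congr rfl fun l _ => by rw [A f i l])
      _ = (Real.sqrt N : ℂ) * ∑ l, ((N : ℂ) * (conj (gft χ g l) * gft χ g l) * gft χ f l)
            * conj (χ l i) * χ l n := by
          rw [Finset.mul_sum, Finset.mul_sum]
          exact Finset.sum_congr rfl fun l _ => by ring
      _ = gtrans χ i (S f) n := by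
          simp only [gtrans, WithLp.ofLp_toLp]
          congr 1
          exact Finset.sum_congr rfl fun l _ => by rw [P1 f l]
end
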